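/- Let $U$ be a dyadic open set in the plane and let $R = I \times J$ be a dyadic rectangle that is at least 2-deep in $U$ (meaning the second-generation parent rectangle $\hat{\hat I} \times \hat{\hat J}$ is contained in $U$). Then $(\mathbf{1}_U, T_1^* \tilde{\mathbf{1}}_I \otimes \tilde{\mathbf{1}}_J) = (\mathbf{1}_U, T_1^* \tilde{\mathbf{1}}_{\hat I} \otimes \tilde{\mathbf{1}}_J)$, where $\tilde{\mathbf{1}}_I = \mathbf{1}_I / |I|$. -/

import Mathlib

open MeasureTheory
open scoped Classical

/-- A dyadic interval `[k·2^(-n), (k+1)·2^(-n))` on the real line, encoded by its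
scale `n` (so that `|I| = 2^(-n)`) and its position `k`. -/
structure DI where
  n : ℤ
  k : ℤ

namespace DI

/-- The underlying half-open interval of a dyadic interval. -/
noncomputable def set (I : DI) : Set ℝ :=
  Set.Ico ((I.k : ℝ) * (2:ℝ) ^ (-I.n)) (((I.k : ℝ) + 1) * (2:ℝ) ^ (-I.n))

/-- The length `|I| = 2^(-n)` of a dyadic interval. -/
noncomputable def len (I : DI) : ℝ := (2:ℝ) ^ (-I.n)

/-- `I` is *even* when `|I| = 2^(-2k)` for an integer `k`. -/
def IsEven (I : DI) : Prop := Even I.n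

/-- The dyadic parent `Î` of `I`. -/
def parent (I : DI) : DI := ⟨I.n - 1, Int.ediv I.k 2⟩

/-- The left (lower) half `I₋` of `I`. -/
def left (I : DI) : DI := ⟨I.n + 1, 2 * I.k⟩

/-- The right (upper) half `I₊` of `I`. -/
def right (I : DI) : DI := ⟨I.n + 1, 2 * I.k + 1⟩

/-- The dyadic sibling of `I` (the other child of `Î`). -/
def sibling (I : DI) : DI := if I.k % 2 = 1 then ⟨I.n, I.k - 1⟩ else ⟨I.n, I.k + 1⟩

/-- `sgn (I, Î)`: equal to `+1` if `I = (Î)₊` (the right child) and `-1` if `I = (Î)₋`. -/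
noncomputable def sgn (I : DI) : ℝ := if I.k % 2 = 1 then 1 else -1

/-- Containment of dyadic intervals. -/
def Sub (I J : DI) : Prop := I.set ⊆ J.set

end DI

/-- The Haar function `h_I = |I|^{-1/2} (𝟏_{I₊} - 𝟏_{I₋})`. -/
noncomputable def haar (I : DI) : ℝ → ℝ := fun x =>
  Real.sqrt ((2:ℝ) ^ I.n) *
    (if x ∈ DI.set (DI.right I) then 1 else if x ∈ DI.set (DI.left I) then -1 else 0)

/-- The Haar coefficient `(f, h_I)`. -/
noncomputable def hcoef (f : ℝ → ℝ) (I : DI) : ℝ := ∫ x, f x * haar I x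

/-- The average `⟨f⟩_I = (f, 𝟏_I/|I|)`. -/
noncomputable def avg (f : ℝ → ℝ) (I : DI) : ℝ := (∫ x in DI.set I, f x) / DI.len I

/-- The normalized indicator `𝟏̃_I = 𝟏_I/|I|`. -/
noncomputable def nind (I : DI) : ℝ → ℝ := fun x => if x ∈ DI.set I then 1 / DI.len I else 0

/-- The dyadic shift `T`, with `T h_I = h_{I₊} - h_{I₋}` for `I` even and `T h_I = 0`
for `I` odd. -/
noncomputable def shift (f : ℝ → ℝ) : ℝ → ℝ := fun x =>
  ∑' I : DI, if DI.IsEven I then hcoef f I * (haar (DI.right I) x - haar (DI.left I) x) else 0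

/-- The adjoint dyadic shift `T*`, with `T* h_I = sgn(I, Î) h_{Î}` for `I` odd and
`T* h_I = 0` for `I` even. -/
noncomputable def shiftAdj (f : ℝ → ℝ) : ℝ → ℝ := fun x =>
  ∑' I : DI, if DI.IsEven I then 0 else hcoef f I * DI.sgn I * haar (DI.parent I) x

/-- The paraproduct `D(b, f) = ∑_I ⟨b⟩_I (f, h_I) h_I`. -/
noncomputable def Dpara (b f : ℝ → ℝ) : ℝ → ℝ := fun x =>
  ∑' I : DI, avg b I * hcoef f I * haar I x

/-- The dyadic shift `T₁` acting in the first variable. -/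
noncomputable def shift1 (F : ℝ × ℝ → ℝ) : ℝ × ℝ → ℝ := fun p => shift (fun x => F (x, p.2)) p.1

/-- The dyadic shift `T₂` acting in the second variable. -/
noncomputable def shift2 (F : ℝ × ℝ → ℝ) : ℝ × ℝ → ℝ := fun p => shift (fun y => F (p.1, y)) p.2

/-- The adjoint shift `T₁*` acting in the first variable. -/
noncomputable def shift1Adj (F : ℝ × ℝ → ℝ) : ℝ × ℝ → ℝ := fun p =>
  shiftAdj (fun x => F (x, p.2)) p.1

/-- The adjoint shift `T₂*` acting in the second variable. -/
noncomputable def shift2Adj (F : ℝ × ℝ → ℝ) : ℝ × ℝ → ℝ := fun p =>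
  shiftAdj (fun y => F (p.1, y)) p.2

/-- The repeated commutator `𝒯^b = [T₂,[T₁,b]] = T₂T₁b· − T₂ b T₁ − T₁ b T₂ + b T₁T₂`. -/
noncomputable def repComm (b F : ℝ × ℝ → ℝ) : ℝ × ℝ → ℝ := fun p =>
  shift2 (shift1 (fun q => b q * F q)) p - shift2 (fun q => b q * shift1 F q) p
    - shift1 (fun q => b q * shift2 F q) p + b p * shift1 (shift2 F) p

/-- The repeated commutator with the adjoint shifts, `𝒯^b_* = [T₂*,[T₁*,b]]`. -/
noncomputable def repCommAdj (b F : ℝ × ℝ → ℝ) : ℝ × ℝ → ℝ := fun p =>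
  shift2Adj (shift1Adj (fun q => b q * F q)) p - shift2Adj (fun q => b q * shift1Adj F q) p
    - shift1Adj (fun q => b q * shift2Adj F q) p + b p * shift1Adj (shift2Adj F) p

/-- The bi-parameter Haar coefficient `(b, h_I ⊗ h_J)`. -/
noncomputable def hcoef2 (b : ℝ × ℝ → ℝ) (I J : DI) : ℝ :=
  ∫ p : ℝ × ℝ, b p * haar I p.1 * haar J p.2

/-- A dyadic rectangle `R = I × J` as a subset of the plane. -/
noncomputable def dRect (R : DI × DI) : Set (ℝ × ℝ) := DI.set R.1 ×ˢ DI.set R.2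

/-- The strong dyadic maximal function `M_s^d`. -/
noncomputable def strongMax (f : ℝ × ℝ → ℝ) (p : ℝ × ℝ) : ℝ :=
  sSup {r : ℝ | ∃ R : DI × DI, p ∈ dRect R ∧
    r = (∫ q in dRect R, |f q|) / (DI.len R.1 * DI.len R.2)}

/-- The enlargement `U = {M_s^d 𝟏_{U₀} ≥ 1/16}` of a set `U₀`. -/
noncomputable def enlarge (U0 : Set (ℝ × ℝ)) : Set (ℝ × ℝ) :=
  {p | (1:ℝ)/16 ≤ strongMax (U0.indicator fun _ => (1:ℝ)) p}

namespace Stmt15Aux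

lemma two_zpow_pos (n : ℤ) : (0:ℝ) < 2 ^ n := by positivity

lemma DI.ext' {I K : DI} (h1 : I.n = K.n) (h2 : I.k = K.k) : I = K := by
  cases I; cases K; simp_all

lemma set_nonempty (I : DI) : I.set.Nonempty := by
  refine ⟨(I.k:ℝ) * 2 ^ (-I.n), le_refl _, ?_⟩
  have := two_zpow_pos (-I.n)
  nlinarith

lemma eq_of_same_scale {I K : DI} (h : I.n = K.n) {x : ℝ} (hx : x ∈ I.set)
    (hy : x ∈ K.set) : I = K := by
  refine DI.ext' h ?_
  obtain ⟨hx1, hx2⟩ := hx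
  obtain ⟨hy1, hy2⟩ := hy
  rw [← h] at hy1 hy2
  have hp := two_zpow_pos (-I.n)
  by_contra hne
  rcases lt_or_gt_of_ne hne with hlt | hlt
  · have : ((I.k:ℝ) + 1) ≤ (K.k:ℝ) := by exact_mod_cast hlt
    nlinarith
  · have : ((K.k:ℝ) + 1) ≤ (I.k:ℝ) := by exact_mod_cast hlt
    nlinarith

lemma twoh (n : ℤ) : (2:ℝ) ^ (-n) = 2 * 2 ^ (-(n+1)) := by
  rw [show (2:ℝ) * 2 ^ (-(n+1)) = 2 ^ (1:ℤ) * 2 ^ (-(n+1)) by norm_num,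
    ← zpow_add₀ (two_ne_zero)]
  congr 1
  ring

lemma mem_parts {K : DI} {x : ℝ} :
    x ∈ K.set ↔ x ∈ (DI.left K).set ∨ x ∈ (DI.right K).set := by
  obtain ⟨n, k⟩ := K
  simp only [DI.set, DI.left, DI.right, Set.mem_Ico]
  push_cast
  rw [twoh n]
  have hp : (0:ℝ) < 2 ^ (-(n+1)) := two_zpow_pos _
  constructor
  · rintro ⟨ha, hb⟩
    rcases le_or_gt ((2*(k:ℝ)+1) * 2 ^ (-(n+1))) x with hc | hc
    · right; constructor <;> nlinarith
    · left; constructor <;> nlinarith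
  · rintro (⟨ha, hb⟩ | ⟨ha, hb⟩) <;> constructor <;> nlinarith

lemma disj_lr {K : DI} {x : ℝ} (h : x ∈ (DI.left K).set) : x ∉ (DI.right K).set := by
  obtain ⟨n, k⟩ := K
  simp only [DI.set, DI.left, DI.right, Set.mem_Ico] at *
  push_cast at *
  intro hx
  nlinarith [two_zpow_pos (-(n+1))]

lemma left_subset {K : DI} : (DI.left K).set ⊆ K.set := fun _ hx => mem_parts.2 (Or.inl hx)
lemma right_subset {K : DI} : (DI.right K).set ⊆ K.set := fun _ hx => mem_parts.2 (Or.inr hx)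

lemma right_parent {I : DI} (h : I.k % 2 = 1) : DI.right (DI.parent I) = I := by
  refine DI.ext' ?_ ?_ <;> simp only [DI.right, DI.parent,
    show Int.ediv I.k 2 = I.k / 2 from rfl] <;> omega

lemma left_parent {I : DI} (h : I.k % 2 = 0) : DI.left (DI.parent I) = I := by
  refine DI.ext' ?_ ?_ <;> simp only [DI.left, DI.parent,
    show Int.ediv I.k 2 = I.k / 2 from rfl] <;> omega

lemma subset_parent {I : DI} : I.set ⊆ (DI.parent I).set := by
  intro x hx
  rcases Int.emod_two_eq I.k with h | h
  · exact left_subset (by rw [left_parent h]; exact hx)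
  · exact right_subset (by rw [right_parent h]; exact hx)

lemma subset_or_disj (j : ℕ) : ∀ I K : DI, I.n = K.n + j →
    (I.set ⊆ K.set ∨ ∀ x ∈ I.set, x ∉ K.set) := by
  induction j with
  | zero =>
    intro I K h
    by_cases he : I = K
    · exact Or.inl (he ▸ subset_refl _)
    · exact Or.inr fun x hx hk => he (eq_of_same_scale (by omega) hx hk)
  | succ j ih =>
    intro I K h
    rcases ih I (DI.left K) (by simp only [DI.left]; push_cast at h ⊢; omega) with hL | hL
    · exact Or.inl (hL.trans left_subset)
    · rcases ih I (DI.right K) (by simp only [DI.right]; push_cast at h ⊢; omega) with hR | hR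
      · exact Or.inl (hR.trans right_subset)
      · exact Or.inr fun x hx hk => by
          rcases mem_parts.1 hk with hm | hm
          · exact hL x hx hm
          · exact hR x hx hm

lemma subset_or_disj' {I K : DI} (h : K.n ≤ I.n) :
    I.set ⊆ K.set ∨ ∀ x ∈ I.set, x ∉ K.set :=
  subset_or_disj (I.n - K.n).toNat I K (by omega)

end Stmt15Aux
namespace Stmt15Aux

lemma haar_eq_zero {K : DI} {x : ℝ} (h : x ∉ K.set) : haar K x = 0 := by
  have hr : x ∉ (DI.right K).set := fun hx => h (right_subset hx)
  have hl : x ∉ (DI.left K).set := fun hx => h (left_subset hx)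
  simp [haar, hr, hl]

lemma mem_of_haar_ne_zero {K : DI} {x : ℝ} (h : haar K x ≠ 0) : x ∈ K.set := by
  by_contra hx; exact h (haar_eq_zero hx)

lemma haar_right {K : DI} {x : ℝ} (h : x ∈ (DI.right K).set) :
    haar K x = Real.sqrt ((2:ℝ) ^ K.n) := by
  simp [haar, h]

lemma haar_left {K : DI} {x : ℝ} (h : x ∈ (DI.left K).set) :
    haar K x = -Real.sqrt ((2:ℝ) ^ K.n) := by
  have hr : x ∉ (DI.right K).set := disj_lr h
  simp [haar, h, hr]

lemma norm_haar_le {K : DI} (x : ℝ) : ‖haar K x‖ ≤ Real.sqrt ((2:ℝ) ^ K.n) := by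
  have h0 : (0:ℝ) ≤ Real.sqrt ((2:ℝ) ^ K.n) := Real.sqrt_nonneg _
  unfold haar
  by_cases h1 : x ∈ (DI.right K).set
  · simp [h1, Real.norm_eq_abs, abs_of_nonneg h0]
  · by_cases h2 : x ∈ (DI.left K).set <;>
      simp [h1, h2, Real.norm_eq_abs, abs_of_nonneg h0]

lemma measurableSet_set (K : DI) : MeasurableSet K.set := measurableSet_Ico

lemma measurable_haar (K : DI) : Measurable (haar K) := by
  unfold haar
  exact measurable_const.mul ((Measurable.ite (measurableSet_set (DI.right K))
    measurable_const (Measurable.ite (measurableSet_set (DI.left K)) measurable_const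
    measurable_const)))

lemma volume_set (K : DI) : MeasureTheory.volume K.set = ENNReal.ofReal ((2:ℝ) ^ (-K.n)) := by
  rw [DI.set, Real.volume_Ico]
  congr 1
  ring

lemma volume_set_lt_top (K : DI) : MeasureTheory.volume K.set < ⊤ := by
  rw [volume_set]; exact ENNReal.ofReal_lt_top

lemma integrable_helper {α : Type*} [MeasurableSpace α] {μ : MeasureTheory.Measure α}
    {f : α → ℝ} {s : Set α} (hm : Measurable f) (hs : MeasurableSet s)
    (hμ : μ s ≠ ⊤) {C : ℝ} (hC : ∀ x, ‖f x‖ ≤ C) (h0 : ∀ x ∉ s, f x = 0) :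
    MeasureTheory.Integrable f μ := by
  have hf : f = s.indicator f := by
    funext x
    by_cases hx : x ∈ s
    · rw [Set.indicator_of_mem hx]
    · rw [Set.indicator_of_notMem hx, h0 x hx]
  rw [hf, MeasureTheory.integrable_indicator_iff hs]
  exact MeasureTheory.Measure.integrableOn_of_bounded hμ hm.aestronglyMeasurable
    (Filter.Eventually.of_forall hC)

lemma integrable_haar (K : DI) : MeasureTheory.Integrable (haar K) := by
  refine integrable_helper (measurable_haar K) (measurableSet_set K)
    (volume_set_lt_top K).ne (norm_haar_le) (fun x hx => haar_eq_zero hx)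

lemma integral_haar (K : DI) : ∫ x, haar K x = 0 := by
  have hrw : haar K = fun x => Real.sqrt ((2:ℝ) ^ K.n) *
      ((DI.right K).set.indicator (fun _ => (1:ℝ)) x
        - (DI.left K).set.indicator (fun _ => (1:ℝ)) x) := by
    funext x
    by_cases hr : x ∈ (DI.right K).set
    · have hl : x ∉ (DI.left K).set := fun h => disj_lr h hr
      simp [haar, hr, hl]
    · by_cases hl : x ∈ (DI.left K).set <;> simp [haar, hr, hl]
  rw [hrw]
  have hir : MeasureTheory.Integrable ((DI.right K).set.indicator (fun _ => (1:ℝ))) := by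
    rw [MeasureTheory.integrable_indicator_iff (measurableSet_set _)]
    exact MeasureTheory.integrableOn_const (volume_set_lt_top _).ne
  have hil : MeasureTheory.Integrable ((DI.left K).set.indicator (fun _ => (1:ℝ))) := by
    rw [MeasureTheory.integrable_indicator_iff (measurableSet_set _)]
    exact MeasureTheory.integrableOn_const (volume_set_lt_top _).ne
  rw [integral_const_mul _ _, MeasureTheory.integral_sub hir hil,
    MeasureTheory.integral_indicator_const _ (measurableSet_set _),
    MeasureTheory.integral_indicator_const _ (measurableSet_set _),
    MeasureTheory.measureReal_def, MeasureTheory.measureReal_def, volume_set, volume_set]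
  simp [DI.right, DI.left]

end Stmt15Aux
namespace Stmt15Aux

lemma one_div_len (L : DI) : 1 / DI.len L = (2:ℝ) ^ L.n := by
  rw [DI.len, one_div, ← zpow_neg, neg_neg]

lemma nind_eq (L : DI) : nind L = fun x => if x ∈ L.set then (2:ℝ) ^ L.n else 0 := by
  funext x; rw [nind, one_div_len]

lemma nind_eq_zero {L : DI} {x : ℝ} (h : x ∉ L.set) : nind L x = 0 := by
  rw [nind_eq]; simp [h]

lemma nind_eq_of_mem {L : DI} {x : ℝ} (h : x ∈ L.set) : nind L x = (2:ℝ) ^ L.n := by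
  rw [nind_eq]; simp [h]

lemma norm_nind_le (L : DI) (x : ℝ) : ‖nind L x‖ ≤ (2:ℝ) ^ L.n := by
  rw [nind_eq]
  by_cases h : x ∈ L.set <;>
    simp [h, Real.norm_eq_abs, abs_of_nonneg (two_zpow_pos L.n).le, (two_zpow_pos L.n).le]

lemma measurable_nind (L : DI) : Measurable (nind L) := by
  rw [nind_eq]
  exact Measurable.ite (measurableSet_set L) measurable_const measurable_const

lemma integrable_nind (L : DI) : MeasureTheory.Integrable (nind L) :=
  integrable_helper (measurable_nind L) (measurableSet_set L) (volume_set_lt_top L).ne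
    (norm_nind_le L) (fun _ hx => nind_eq_zero hx)

/-- If `haar L` is constant on the support of `haar K`, the product integrates to `0`. -/
lemma int_haar_mul_eq_zero {K L : DI} (c : ℝ) (h : ∀ x, haar K x ≠ 0 → haar L x = c) :
    ∫ x, haar L x * haar K x = 0 := by
  have hrw : (fun x => haar L x * haar K x) = fun x => c * haar K x := by
    funext x
    by_cases hx : haar K x = 0
    · simp [hx]
    · rw [h x hx]
  rw [hrw, integral_const_mul _ _, integral_haar, mul_zero]

lemma orth_lt {K L : DI} (h : L.n < K.n) : ∫ x, haar L x * haar K x = 0 := by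
  rcases subset_or_disj' (show L.n ≤ K.n from h.le) (I := K) (K := L) with hs | hd
  · rcases subset_or_disj' (show (DI.left L).n ≤ K.n from by simp only [DI.left]; omega)
        (I := K) (K := DI.left L) with hs2 | hd2
    · exact int_haar_mul_eq_zero (-Real.sqrt ((2:ℝ) ^ L.n))
        (fun x hx => haar_left (hs2 (mem_of_haar_ne_zero hx)))
    · refine int_haar_mul_eq_zero (Real.sqrt ((2:ℝ) ^ L.n)) (fun x hx => ?_)
      have hxK := mem_of_haar_ne_zero hx
      rcases mem_parts.1 (hs hxK) with hm | hm
      · exact absurd hm (hd2 x hxK)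
      · exact haar_right hm
  · exact int_haar_mul_eq_zero 0 (fun x hx =>
      haar_eq_zero (hd x (mem_of_haar_ne_zero hx)))

lemma orth {K L : DI} (hne : K ≠ L) : ∫ x, haar L x * haar K x = 0 := by
  rcases lt_trichotomy L.n K.n with h | h | h
  · exact orth_lt h
  · refine int_haar_mul_eq_zero 0 (fun x hx => ?_)
    by_contra hL
    exact hne (eq_of_same_scale h.symm (mem_of_haar_ne_zero hx) (mem_of_haar_ne_zero hL))
  · have : (fun x => haar L x * haar K x) = fun x => haar K x * haar L x := by
      funext x; ring
    rw [this]
    exact orth_lt h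

lemma integrable_nind_mul_haar (L K : DI) :
    MeasureTheory.Integrable (fun x => nind L x * haar K x) := by
  refine integrable_helper ((measurable_nind L).mul (measurable_haar K))
    (measurableSet_set L) (volume_set_lt_top L).ne
    (C := (2:ℝ) ^ L.n * Real.sqrt ((2:ℝ) ^ K.n)) (fun x => ?_)
    (fun x hx => by rw [nind_eq_zero hx, zero_mul])
  rw [norm_mul]
  exact mul_le_mul (norm_nind_le L x) (norm_haar_le x) (norm_nonneg _) (two_zpow_pos L.n).le

lemma hcoef_nind_zero_of_subset {L K : DI} (h : K.set ⊆ L.set) : hcoef (nind L) K = 0 := by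
  have hrw : (fun x => nind L x * haar K x) = fun x => (2:ℝ) ^ L.n * haar K x := by
    funext x
    by_cases hx : haar K x = 0
    · simp [hx]
    · rw [nind_eq_of_mem (h (mem_of_haar_ne_zero hx))]
  rw [hcoef, hrw, integral_const_mul _ _, integral_haar, mul_zero]

lemma hcoef_nind_zero_of_disj {L K : DI} (h : ∀ x ∈ K.set, x ∉ L.set) :
    hcoef (nind L) K = 0 := by
  have hrw : (fun x => nind L x * haar K x) = fun _ => (0:ℝ) := by
    funext x
    by_cases hx : haar K x = 0
    · simp [hx]
    · rw [nind_eq_zero (h x (mem_of_haar_ne_zero hx)), zero_mul]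
  rw [hcoef, hrw, MeasureTheory.integral_zero]

lemma hcoef_support {L K : DI} (h : hcoef (nind L) K ≠ 0) :
    L.set ⊆ K.set ∧ K.n < L.n := by
  by_cases hn : K.n < L.n
  · refine ⟨?_, hn⟩
    rcases subset_or_disj' (show K.n ≤ L.n from hn.le) (I := L) (K := K) with hs | hd
    · exact hs
    · exact absurd (hcoef_nind_zero_of_disj (fun x hxK hxL => hd x hxL hxK)) h
  · exfalso
    rcases subset_or_disj' (show L.n ≤ K.n from by omega) (I := K) (K := L) with hs | hd
    · exact h (hcoef_nind_zero_of_subset hs)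
    · exact h (hcoef_nind_zero_of_disj hd)

lemma hcoef_bound (L K : DI) : ‖hcoef (nind L) K‖ ≤ Real.sqrt ((2:ℝ) ^ K.n) := by
  rw [hcoef, ← MeasureTheory.setIntegral_eq_integral_of_forall_compl_eq_zero
    (s := L.set) (fun x hx => by rw [nind_eq_zero hx, zero_mul])]
  have hb : ∀ x ∈ L.set, ‖nind L x * haar K x‖ ≤ (2:ℝ) ^ L.n * Real.sqrt ((2:ℝ) ^ K.n) := by
    intro x _
    rw [norm_mul]
    exact mul_le_mul (norm_nind_le L x) (norm_haar_le x) (norm_nonneg _) (two_zpow_pos L.n).le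
  have := MeasureTheory.norm_setIntegral_le_of_norm_le_const (volume_set_lt_top L) hb
  calc ‖∫ x in L.set, nind L x * haar K x‖
      ≤ (2:ℝ) ^ L.n * Real.sqrt ((2:ℝ) ^ K.n) * (MeasureTheory.volume L.set).toReal := this
    _ = Real.sqrt ((2:ℝ) ^ K.n) := by
        rw [volume_set, ENNReal.toReal_ofReal (two_zpow_pos (-L.n)).le]
        rw [show (2:ℝ) ^ L.n * Real.sqrt ((2:ℝ) ^ K.n) * 2 ^ (-L.n)
            = Real.sqrt ((2:ℝ) ^ K.n) * ((2:ℝ) ^ L.n * 2 ^ (-L.n)) by ring,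
          ← zpow_add₀ (two_ne_zero : (2:ℝ) ≠ 0)]
        simp

end Stmt15Aux
namespace Stmt15Aux

lemma parent_n (I : DI) : (DI.parent I).n = I.n - 1 := rfl

lemma two_zpow_split (n : ℤ) : (2:ℝ) ^ n = 2 ^ (n - 1) * 2 := by
  rw [← zpow_add_one₀ (two_ne_zero : (2:ℝ) ≠ 0)]
  congr 1; ring

lemma sqrt_sq_zpow (n : ℤ) :
    Real.sqrt ((2:ℝ) ^ n) * Real.sqrt ((2:ℝ) ^ n) = (2:ℝ) ^ n :=
  Real.mul_self_sqrt (two_zpow_pos n).le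

/-- Pointwise identity: `𝟏̃_I − 𝟏̃_{Î} = sgn(I) |Î|^{-1/2} h_{Î}`. -/
lemma nind_sub (I : DI) (x : ℝ) :
    nind I x - nind (DI.parent I) x
      = (DI.sgn I * Real.sqrt ((2:ℝ) ^ (I.n - 1))) * haar (DI.parent I) x := by
  set P := DI.parent I with hP
  have hPn : P.n = I.n - 1 := rfl
  have e1 : (2:ℝ) ^ I.n = 2 ^ (I.n - 1) * 2 := two_zpow_split I.n
  have e2 := sqrt_sq_zpow (I.n - 1)
  rcases Int.emod_two_eq I.k with hpar | hpar
  · -- I is the left child, sgn I = -1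
    have hI : DI.left P = I := left_parent hpar
    have hsgn : DI.sgn I = -1 := by rw [DI.sgn, if_neg (by omega)]
    by_cases hx : x ∈ (DI.left P).set
    · rw [nind_eq_of_mem (by rw [← hI]; exact hx),
        nind_eq_of_mem (left_subset hx), haar_left hx, hsgn, hPn]
      nlinarith [e1, e2]
    · by_cases hx2 : x ∈ (DI.right P).set
      · rw [nind_eq_zero (by rw [← hI]; exact hx),
          nind_eq_of_mem (right_subset hx2), haar_right hx2, hsgn, hPn]
        nlinarith [e1, e2]
      · have hxP : x ∉ P.set := fun h => by
          rcases mem_parts.1 h with h' | h' <;> [exact hx h'; exact hx2 h']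
        rw [nind_eq_zero (by rw [← hI]; exact hx), nind_eq_zero hxP, haar_eq_zero hxP]
        ring
  · -- I is the right child, sgn I = 1
    have hI : DI.right P = I := right_parent hpar
    have hsgn : DI.sgn I = 1 := by rw [DI.sgn, if_pos hpar]
    by_cases hx : x ∈ (DI.right P).set
    · rw [nind_eq_of_mem (by rw [← hI]; exact hx),
        nind_eq_of_mem (right_subset hx), haar_right hx, hsgn, hPn]
      nlinarith [e1, e2]
    · by_cases hx2 : x ∈ (DI.left P).set
      · rw [nind_eq_zero (by rw [← hI]; exact hx),
          nind_eq_of_mem (left_subset hx2), haar_left hx2, hsgn, hPn]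
        nlinarith [e1, e2]
      · have hxP : x ∉ P.set := fun h => by
          rcases mem_parts.1 h with h' | h' <;> [exact hx2 h'; exact hx h']
        rw [nind_eq_zero (by rw [← hI]; exact hx), nind_eq_zero hxP, haar_eq_zero hxP]
        ring

/-- For `K ≠ Î`, the coefficients of `𝟏̃_I` and `𝟏̃_{Î}` against `h_K` agree. -/
lemma hcoef_eq_of_ne_parent {I K : DI} (h : K ≠ DI.parent I) :
    hcoef (nind I) K = hcoef (nind (DI.parent I)) K := by
  have hhh : hcoef (nind I) K - hcoef (nind (DI.parent I)) K = 0 := by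
    rw [hcoef, hcoef, ← MeasureTheory.integral_sub (integrable_nind_mul_haar I K)
      (integrable_nind_mul_haar (DI.parent I) K)]
    have : (fun x => nind I x * haar K x - nind (DI.parent I) x * haar K x)
        = fun x => (DI.sgn I * Real.sqrt ((2:ℝ) ^ (I.n - 1)))
            * (haar (DI.parent I) x * haar K x) := by
      funext x
      rw [show nind I x * haar K x - nind (DI.parent I) x * haar K x
          = (nind I x - nind (DI.parent I) x) * haar K x by ring, nind_sub]
      ring
    rw [this, integral_const_mul _ _, orth h, mul_zero]
  linarith [hhh]

lemma iter_parent_n (m : ℕ) (L : DI) : ((DI.parent)^[m] L).n = L.n - m := by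
  induction m with
  | zero => simp
  | succ m ih =>
    rw [Function.iterate_succ_apply', parent_n, ih]
    push_cast; ring

lemma subset_iter_parent (m : ℕ) (L : DI) : L.set ⊆ ((DI.parent)^[m] L).set := by
  induction m with
  | zero => simp
  | succ m ih =>
    rw [Function.iterate_succ_apply']
    exact ih.trans subset_parent

lemma eq_iter_of_subset {L K : DI} (h : L.set ⊆ K.set) (hn : K.n ≤ L.n) :
    K = (DI.parent)^[(L.n - K.n).toNat] L := by
  obtain ⟨x, hx⟩ := set_nonempty L
  refine eq_of_same_scale ?_ (h hx) (subset_iter_parent _ L hx)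
  rw [iter_parent_n]
  omega

end Stmt15Aux
namespace Stmt15Aux

lemma norm_sgn (K : DI) : ‖DI.sgn K‖ = 1 := by
  rw [DI.sgn]; split_ifs <;> simp

lemma sqrt_prod_geom (b : ℤ) (m : ℕ) :
    Real.sqrt ((2:ℝ) ^ (b - (m:ℤ))) * Real.sqrt ((2:ℝ) ^ (b - 1 - (m:ℤ)))
      = Real.sqrt ((2:ℝ) ^ b) * Real.sqrt ((2:ℝ) ^ (b - 1)) * (2⁻¹:ℝ) ^ m := by
  have hr : (0:ℝ) ≤ (2⁻¹:ℝ) ^ m := by positivity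
  have d : ∀ a : ℤ, (2:ℝ) ^ (a - (m:ℤ)) = 2 ^ a * (2⁻¹:ℝ) ^ m := by
    intro a
    rw [zpow_sub₀ (two_ne_zero : (2:ℝ) ≠ 0), zpow_natCast, div_eq_mul_inv, ← inv_pow]
  rw [d b, show b - 1 - (m:ℤ) = (b - 1) - (m:ℤ) by ring, d (b-1),
    Real.sqrt_mul (two_zpow_pos b).le, Real.sqrt_mul (two_zpow_pos (b-1)).le]
  calc (Real.sqrt ((2:ℝ) ^ b) * Real.sqrt ((2⁻¹:ℝ) ^ m))
        * (Real.sqrt ((2:ℝ) ^ (b-1)) * Real.sqrt ((2⁻¹:ℝ) ^ m))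
      = Real.sqrt ((2:ℝ) ^ b) * Real.sqrt ((2:ℝ) ^ (b-1))
        * (Real.sqrt ((2⁻¹:ℝ) ^ m) * Real.sqrt ((2⁻¹:ℝ) ^ m)) := by ring
    _ = _ := by rw [Real.mul_self_sqrt hr]

lemma summable_beta (L : DI) (x : ℝ) :
    Summable (fun K : DI =>
      if DI.IsEven K then 0 else hcoef (nind L) K * DI.sgn K * haar (DI.parent K) x) := by
  set f : DI → ℝ := fun K =>
    if DI.IsEven K then 0 else hcoef (nind L) K * DI.sgn K * haar (DI.parent K) x with hf
  have hsupp : ∀ K, f K ≠ 0 → L.set ⊆ K.set ∧ K.n < L.n := by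
    intro K hK
    by_cases he : DI.IsEven K
    · exact absurd (by rw [hf]; simp [he]) hK
    · refine hcoef_support (fun h0 => hK ?_)
      rw [hf]; simp [he, h0]
  set ι : ℕ → DI := fun m => (DI.parent)^[m+1] L with hι
  have hι_n : ∀ m, (ι m).n = L.n - (m+1 : ℕ) := fun m => iter_parent_n (m+1) L
  have hinj : Function.Injective ι := by
    intro a b h
    have := congrArg DI.n h
    rw [hι_n, hι_n] at this
    push_cast at this
    omega
  have hrange : ∀ K ∉ Set.range ι, f K = 0 := by
    intro K hK
    by_contra hfne
    obtain ⟨hsub, hn⟩ := hsupp K hfne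
    refine hK ⟨(L.n - K.n).toNat - 1, ?_⟩
    have h1 : ((L.n - K.n).toNat - 1) + 1 = (L.n - K.n).toNat := by omega
    show (DI.parent)^[((L.n - K.n).toNat - 1) + 1] L = K
    rw [h1]
    exact (eq_iter_of_subset hsub hn.le).symm
  rw [← Function.Injective.summable_iff hinj hrange]
  refine Summable.of_norm_bounded
    (g := fun m => (Real.sqrt ((2:ℝ) ^ (L.n - 1)) * Real.sqrt ((2:ℝ) ^ (L.n - 1 - 1))) * (2⁻¹:ℝ) ^ m)
    (Summable.mul_left _ (summable_geometric_of_lt_one (by norm_num) (by norm_num))) ?_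
  intro m
  have hn1 : (ι m).n = L.n - 1 - (m:ℤ) := by rw [hι_n]; push_cast; ring
  by_cases he : DI.IsEven (ι m)
  · show ‖f (ι m)‖ ≤ _
    rw [hf]
    simp only [he, if_pos]
    rw [norm_zero]
    positivity
  · show ‖f (ι m)‖ ≤ _
    rw [hf]
    simp only [he, if_neg, ite_false]
    calc ‖hcoef (nind L) (ι m) * DI.sgn (ι m) * haar (DI.parent (ι m)) x‖
        = ‖hcoef (nind L) (ι m)‖ * ‖DI.sgn (ι m)‖ * ‖haar (DI.parent (ι m)) x‖ := by
          rw [norm_mul, norm_mul]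
      _ ≤ Real.sqrt ((2:ℝ) ^ (ι m).n) * 1 * Real.sqrt ((2:ℝ) ^ ((ι m).n - 1)) := by
          refine mul_le_mul (mul_le_mul (hcoef_bound L (ι m)) (le_of_eq (norm_sgn _))
            (norm_nonneg _) (Real.sqrt_nonneg _)) ?_ (norm_nonneg _) (by positivity)
          exact norm_haar_le x
      _ = Real.sqrt ((2:ℝ) ^ ((L.n - 1) - (m:ℤ)))
            * Real.sqrt ((2:ℝ) ^ ((L.n - 1) - 1 - (m:ℤ))) := by
          rw [mul_one, hn1]
          congr 2
          ring_nf
      _ = _ := sqrt_prod_geom (L.n - 1) m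

end Stmt15Aux
namespace Stmt15Aux

/-- The constant in front of `h_{Î̂}` produced by replacing `𝟏̃_I` with `𝟏̃_{Î}`. -/
noncomputable def epsc (I : DI) : ℝ :=
  if DI.IsEven (DI.parent I) then 0
  else (hcoef (nind I) (DI.parent I) - hcoef (nind (DI.parent I)) (DI.parent I))
    * DI.sgn (DI.parent I)

lemma tsum_alpha (I : DI) (x : ℝ) :
    (∑' K : DI, if DI.IsEven K then 0 else hcoef (nind I) K * DI.sgn K * haar (DI.parent K) x)
      = (∑' K : DI, if DI.IsEven K then 0
          else hcoef (nind (DI.parent I)) K * DI.sgn K * haar (DI.parent K) x)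
        + epsc I * haar (DI.parent (DI.parent I)) x := by
  classical
  set P := DI.parent I with hP
  set v : ℝ := if DI.IsEven P then 0
    else (hcoef (nind I) P - hcoef (nind P) P) * DI.sgn P * haar (DI.parent P) x with hv
  have hαβ : ∀ K : DI,
      (if DI.IsEven K then 0 else hcoef (nind I) K * DI.sgn K * haar (DI.parent K) x)
        = (if DI.IsEven K then 0 else hcoef (nind P) K * DI.sgn K * haar (DI.parent K) x)
          + (if K = P then v else 0) := by
    intro K
    by_cases hK : K = P
    · rw [hK, if_pos rfl, hv]
      by_cases he : DI.IsEven P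
      · simp [he]
      · simp only [he, if_false]
        ring
    · rw [if_neg hK, add_zero]
      by_cases he : DI.IsEven K
      · simp [he]
      · simp only [he, if_false]
        rw [hcoef_eq_of_ne_parent hK]
  rw [tsum_congr hαβ,
    Summable.tsum_add (summable_beta P x)
      (summable_of_ne_finset_zero (s := {P}) (fun K hK => if_neg (by simpa using hK))),
    tsum_eq_single P (fun K hK => if_neg hK), if_pos rfl]
  congr 1
  rw [hv, epsc, ← hP]
  split_ifs <;> ring

/-- Key pointwise identity for the bi-parameter function. -/
lemma key (I J : DI) (p : ℝ × ℝ) :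
    shift1Adj (fun q => nind I q.1 * nind J q.2) p
      = shift1Adj (fun q => nind (DI.parent I) q.1 * nind J q.2) p
        + nind J p.2 * (epsc I * haar (DI.parent (DI.parent I)) p.1) := by
  obtain ⟨x, y⟩ := p
  show shiftAdj (fun t => nind I t * nind J y) x
      = shiftAdj (fun t => nind (DI.parent I) t * nind J y) x
        + nind J y * (epsc I * haar (DI.parent (DI.parent I)) x)
  have hmulc : ∀ (L K : DI),
      hcoef (fun t => nind L t * nind J y) K = nind J y * hcoef (nind L) K := by
    intro L K
    rw [hcoef, hcoef, ← integral_const_mul _ _]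
    congr 1; funext t; ring
  have hterm : ∀ (L K : DI),
      (if DI.IsEven K then 0
        else hcoef (fun t => nind L t * nind J y) K * DI.sgn K * haar (DI.parent K) x)
        = nind J y * (if DI.IsEven K then 0
            else hcoef (nind L) K * DI.sgn K * haar (DI.parent K) x) := by
    intro L K
    by_cases he : DI.IsEven K
    · simp [he]
    · simp only [he, if_false]
      rw [hmulc]; ring
  rw [shiftAdj, shiftAdj]
  rw [tsum_congr (hterm I), tsum_congr (hterm (DI.parent I)), tsum_mul_left, tsum_mul_left,
    tsum_alpha I x]
  ring

end Stmt15Aux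
namespace Stmt15Aux

lemma integrable_D (I J : DI) :
    MeasureTheory.Integrable
      (fun p : ℝ × ℝ => nind J p.2 * (epsc I * haar (DI.parent (DI.parent I)) p.1)) := by
  set PP := DI.parent (DI.parent I) with hPP
  refine integrable_helper
    (((measurable_nind J).comp measurable_snd).mul
      ((measurable_const.mul (measurable_haar PP)).comp measurable_fst))
    ((measurableSet_set PP).prod (measurableSet_set J))
    ?_ (C := (2:ℝ) ^ J.n * (‖epsc I‖ * Real.sqrt ((2:ℝ) ^ PP.n))) ?_ ?_
  · rw [MeasureTheory.Measure.volume_eq_prod, MeasureTheory.Measure.prod_prod]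
    exact (ENNReal.mul_lt_top (volume_set_lt_top PP) (volume_set_lt_top J)).ne
  · intro p
    rw [norm_mul]
    refine mul_le_mul (norm_nind_le J p.2) ?_ (norm_nonneg _) (two_zpow_pos J.n).le
    rw [norm_mul]
    exact mul_le_mul_of_nonneg_left (norm_haar_le _) (norm_nonneg _)
  · intro p hp
    rw [Set.mem_prod] at hp
    push_neg at hp
    by_cases h1 : p.1 ∈ PP.set
    · rw [nind_eq_zero (hp h1), zero_mul]
    · rw [haar_eq_zero h1, mul_zero, mul_zero]

lemma integral_D (I J : DI) :
    (∫ p : ℝ × ℝ, nind J p.2 * (epsc I * haar (DI.parent (DI.parent I)) p.1)) = 0 := by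
  have hrw : (fun p : ℝ × ℝ => nind J p.2 * (epsc I * haar (DI.parent (DI.parent I)) p.1))
      = fun p : ℝ × ℝ => (fun x => epsc I * haar (DI.parent (DI.parent I)) x) p.1
          * (fun y => nind J y) p.2 := by
    funext p; ring
  rw [hrw, MeasureTheory.Measure.volume_eq_prod,
    MeasureTheory.integral_prod_mul (fun x : ℝ => epsc I * haar (DI.parent (DI.parent I)) x)
      (fun y : ℝ => nind J y),
    integral_const_mul _ _, integral_haar, mul_zero, zero_mul]

end Stmt15Aux

open Stmt15Aux in
/-- **Horizontal spreading of coefficients:** if the dyadic rectangle `I × J` is at least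
2-deep in the dyadic open set `U` (the grandparent rectangle is contained in `U`), then
`(𝟏_U, T₁* 𝟏̃_I ⊗ 𝟏̃_J) = (𝟏_U, T₁* 𝟏̃_{Î} ⊗ 𝟏̃_J)`. -/
theorem stmt15 (S : Finset (DI × DI)) (I J : DI)
    (hdeep : dRect (DI.parent (DI.parent I), DI.parent (DI.parent J)) ⊆ ⋃ R ∈ S, dRect R) :
    (∫ p in (⋃ R ∈ S, dRect R), shift1Adj (fun q => nind I q.1 * nind J q.2) p) =
      ∫ p in (⋃ R ∈ S, dRect R), shift1Adj (fun q => nind (DI.parent I) q.1 * nind J q.2) p := by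
  classical
  set U : Set (ℝ × ℝ) := ⋃ R ∈ S, dRect R with hU
  set D : ℝ × ℝ → ℝ :=
    fun p => nind J p.2 * (epsc I * haar (DI.parent (DI.parent I)) p.1) with hD
  have hkey : ∀ p : ℝ × ℝ,
      shift1Adj (fun q => nind I q.1 * nind J q.2) p
        = shift1Adj (fun q => nind (DI.parent I) q.1 * nind J q.2) p + D p :=
    fun p => key I J p
  have hD0 : ∀ p ∉ U, D p = 0 := by
    intro p hp
    have hmem : p ∉ dRect (DI.parent (DI.parent I), DI.parent (DI.parent J)) :=
      fun h => hp (hdeep h)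
    rw [dRect, Set.mem_prod] at hmem
    push_neg at hmem
    by_cases h1 : p.1 ∈ (DI.parent (DI.parent I)).set
    · have h2 : p.2 ∉ J.set := fun hj =>
        hmem h1 (subset_parent (subset_parent hj))
      rw [hD]
      simp only
      rw [nind_eq_zero h2, zero_mul]
    · rw [hD]
      simp only
      rw [haar_eq_zero h1, mul_zero, mul_zero]
  by_cases hI2 : MeasureTheory.IntegrableOn
      (fun p => shift1Adj (fun q => nind (DI.parent I) q.1 * nind J q.2) p) U
  · calc (∫ p in U, shift1Adj (fun q => nind I q.1 * nind J q.2) p)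
        = ∫ p in U, (shift1Adj (fun q => nind (DI.parent I) q.1 * nind J q.2) p + D p) := by
          simp only [hkey]
      _ = (∫ p in U, shift1Adj (fun q => nind (DI.parent I) q.1 * nind J q.2) p)
            + ∫ p in U, D p :=
          MeasureTheory.integral_add hI2 ((integrable_D I J).integrableOn)
      _ = ∫ p in U, shift1Adj (fun q => nind (DI.parent I) q.1 * nind J q.2) p := by
          rw [MeasureTheory.setIntegral_eq_integral_of_forall_compl_eq_zero hD0,
            integral_D I J, add_zero]
  · have hI1 : ¬ MeasureTheory.IntegrableOn
        (fun p => shift1Adj (fun q => nind I q.1 * nind J q.2) p) U := by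
      intro h
      refine hI2 ?_
      have : (fun p => shift1Adj (fun q => nind (DI.parent I) q.1 * nind J q.2) p)
          = fun p => shift1Adj (fun q => nind I q.1 * nind J q.2) p - D p := by
        funext p; rw [hkey p]; ring
      rw [this]
      exact h.sub (integrable_D I J).integrableOn
    rw [MeasureTheory.integral_undef hI1, MeasureTheory.integral_undef hI2]
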